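/- Let X_1,...,X_n be {0,1}-valued random variables with E[X_i] = x_i satisfying E[∏_{i∈T}(1-X_i)] ≤ ∏_{i∈T}(1-x_i) for every T ⊆ [n]. Let a_i ∈ [0,1], X = ∑ a_i X_i, and μ ≤ ∑ a_i x_i. Then for any δ ∈ [0,1], Pr[X ≤ (1-δ)μ] ≤ e^{-μδ²/2}. -/

import Mathlib

open MeasureTheory Finset

lemma exp_neg_le_aux (x : ℝ) (hx : 0 ≤ x) : Real.exp (-x) ≤ 1 - x + x^2/2 := by
  have h3 : 1 + x + x^2/2 ≤ Real.exp x := by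
    have := Real.sum_le_exp_of_nonneg hx 3
    simp [Finset.sum_range_succ, Nat.factorial] at this
    linarith
  have hE : Real.exp (-x) * Real.exp x = 1 := by rw [← Real.exp_add]; simp
  nlinarith [Real.exp_pos (-x), Real.exp_pos x]

theorem stmt_14 {Ω : Type*} [MeasurableSpace Ω] (P : Measure Ω) [IsProbabilityMeasure P]
    {n : ℕ} (X : Fin n → Ω → ℝ) (x : Fin n → ℝ)
    (hmeas : ∀ i, Measurable (X i))
    (h01 : ∀ i ω, X i ω = 0 ∨ X i ω = 1)
    (hmean : ∀ i, ∫ ω, X i ω ∂P = x i)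
    (hneg' : ∀ T : Finset (Fin n),
      ∫ ω, ∏ i ∈ T, (1 - X i ω) ∂P ≤ ∏ i ∈ T, (1 - x i))
    (a : Fin n → ℝ) (ha : ∀ i, a i ∈ Set.Icc (0:ℝ) 1)
    (m : ℝ) (hm : m ≤ ∑ i, a i * x i)
    (δ : ℝ) (hδ : δ ∈ Set.Icc (0:ℝ) 1) :
    (P {ω | ∑ i, a i * X i ω ≤ (1 - δ) * m}).toReal
      ≤ Real.exp (-(m * δ ^ 2) / 2) := by
  obtain ⟨hδ0, hδ1⟩ := hδ
  have hX0 : ∀ i ω, 0 ≤ X i ω := fun i ω => by rcases h01 i ω with h|h <;> simp [h]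
  have hX1 : ∀ i ω, X i ω ≤ 1 := fun i ω => by rcases h01 i ω with h|h <;> simp [h]
  have hXint : ∀ i, Integrable (X i) P := fun i =>
    (integrable_const (1:ℝ)).mono' (hmeas i).aestronglyMeasurable
      (ae_of_all _ fun ω => by
        rw [Real.norm_eq_abs, abs_of_nonneg (hX0 i ω)]; exact hX1 i ω)
  have hx0 : ∀ i, 0 ≤ x i := fun i => (hmean i) ▸ integral_nonneg (fun ω => hX0 i ω)
  have hx1 : ∀ i, x i ≤ 1 := fun i => by
    rw [← hmean i]
    calc ∫ ω, X i ω ∂P ≤ ∫ _ω, (1:ℝ) ∂P :=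
          integral_mono (hXint i) (integrable_const 1) (fun ω => hX1 i ω)
    _ = 1 := by simp
  by_cases hmδ : m ≤ 0 ∨ δ = 0
  · have h1 : (P {ω | ∑ i, a i * X i ω ≤ (1 - δ) * m}).toReal ≤ 1 :=
      ENNReal.toReal_mono (by norm_num) prob_le_one
    refine h1.trans (Real.one_le_exp ?_)
    rcases hmδ with h | h
    · nlinarith
    · simp [h]
  · push_neg at hmδ
    obtain ⟨hm0, hδne⟩ := hmδ
    have hδpos : 0 < δ := lt_of_le_of_ne hδ0 (Ne.symm hδne)
    set c : Fin n → ℝ := fun i => 1 - Real.exp (-(δ * a i)) with hc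
    have hc0 : ∀ i, 0 ≤ c i := fun i => by
      have h1 : Real.exp (-(δ * a i)) ≤ 1 := by
        rw [Real.exp_le_one_iff]
        nlinarith [(ha i).1]
      simp only [hc]; linarith
    have hc1 : ∀ i, c i ≤ 1 := fun i => by
      have := Real.exp_pos (-(δ * a i)); simp [hc]; linarith
    set g : Ω → ℝ := fun ω => ∏ i, (1 - c i * X i ω) with hg
    -- pointwise identity with exp
    have hgexp : ∀ ω, Real.exp (-(δ * ∑ i, a i * X i ω)) = g ω := by
      intro ω
      have : -(δ * ∑ i, a i * X i ω) = ∑ i, -(δ * (a i * X i ω)) := by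
        rw [Finset.mul_sum]; rw [← Finset.sum_neg_distrib]
      rw [this, Real.exp_sum]
      refine Finset.prod_congr rfl fun i _ => ?_
      rcases h01 i ω with h|h
      · simp [h]
      · simp [h, hc]
    -- integrability of products of (1 - X i)
    have hprodint : ∀ T : Finset (Fin n),
        Integrable (fun ω => ∏ i ∈ T, (1 - X i ω)) P := by
      intro T
      refine (integrable_const (1:ℝ)).mono'
        (Finset.measurable_prod T fun i _ => (measurable_const.sub (hmeas i))).aestronglyMeasurable
        (ae_of_all _ fun ω => ?_)
      rw [Real.norm_eq_abs, abs_of_nonneg (Finset.prod_nonneg fun i _ => by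
        have := hX1 i ω; linarith)]
      exact Finset.prod_le_one (fun i _ => by have := hX1 i ω; linarith)
        (fun i _ => by have := hX0 i ω; linarith)
    -- key product bound
    have hrw : ∀ ω, g ω = ∑ T ∈ (univ : Finset (Fin n)).powerset,
        ((∏ i ∈ T, c i) * ∏ i ∈ univ \ T, (1 - c i)) * ∏ i ∈ T, (1 - X i ω) := by
      intro ω
      have h1 : g ω = ∏ i, (c i * (1 - X i ω) + (1 - c i)) :=
        Finset.prod_congr rfl fun i _ => by ring
      rw [h1, Finset.prod_add]
      refine Finset.sum_congr rfl fun T _ => ?_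
      rw [Finset.prod_mul_distrib]; ring
    have key : ∫ ω, g ω ∂P ≤ ∏ i, (1 - c i * x i) := by
      have hcoef : ∀ T : Finset (Fin n),
          0 ≤ (∏ i ∈ T, c i) * ∏ i ∈ univ \ T, (1 - c i) :=
        fun T => mul_nonneg (Finset.prod_nonneg fun i _ => hc0 i)
          (Finset.prod_nonneg fun i _ => by have := hc1 i; linarith)
      calc ∫ ω, g ω ∂P
          = ∑ T ∈ (univ : Finset (Fin n)).powerset,
              ((∏ i ∈ T, c i) * ∏ i ∈ univ \ T, (1 - c i)) *
                ∫ ω, ∏ i ∈ T, (1 - X i ω) ∂P := by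
            simp_rw [hrw]
            rw [integral_finset_sum _ (fun T _ => ((hprodint T).const_mul _))]
            exact Finset.sum_congr rfl fun T _ => integral_const_mul _ _
        _ ≤ ∑ T ∈ (univ : Finset (Fin n)).powerset,
              ((∏ i ∈ T, c i) * ∏ i ∈ univ \ T, (1 - c i)) * ∏ i ∈ T, (1 - x i) :=
            Finset.sum_le_sum fun T _ =>
              mul_le_mul_of_nonneg_left (hneg' T) (hcoef T)
        _ = ∏ i, (c i * (1 - x i) + (1 - c i)) := by
            rw [Finset.prod_add]
            exact (Finset.sum_congr rfl fun T _ => by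
              rw [Finset.prod_mul_distrib]; ring).symm
        _ = ∏ i, (1 - c i * x i) := Finset.prod_congr rfl fun i _ => by ring
    -- prod ≤ exp of sum
    have hD : ∏ i, (1 - c i * x i) ≤ Real.exp (-(∑ i, c i * x i)) := by
      have : Real.exp (-(∑ i, c i * x i)) = ∏ i, Real.exp (-(c i * x i)) := by
        rw [← Real.exp_sum]; congr 1; rw [← Finset.sum_neg_distrib]
      rw [this]
      refine Finset.prod_le_prod (fun i _ => ?_) (fun i _ => ?_)
      · have h1 : c i * x i ≤ 1 :=
          mul_le_one₀ (hc1 i) (hx0 i) (hx1 i)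
        linarith
      · have := Real.add_one_le_exp (-(c i * x i)); linarith
    -- sum lower bound
    have hE : (1 - Real.exp (-δ)) * m ≤ ∑ i, c i * x i := by
      have hconv : ∀ i, Real.exp (-(δ * a i)) ≤ (1 - a i) + a i * Real.exp (-δ) := by
        intro i
        obtain ⟨ha0, ha1⟩ := ha i
        have := convexOn_exp.2 (Set.mem_univ (0:ℝ)) (Set.mem_univ (-δ))
          (by linarith : (0:ℝ) ≤ 1 - a i) ha0 (by ring)
        simp only [smul_eq_mul, mul_zero, zero_add, Real.exp_zero, mul_one] at this
        rw [show -(δ * a i) = a i * -δ by ring]; exact this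
      have h1 : ∀ i, (1 - Real.exp (-δ)) * (a i * x i) ≤ c i * x i := by
        intro i
        have h2 : (1 - Real.exp (-δ)) * a i ≤ c i := by
          have := hconv i; simp [hc]; nlinarith
        have := hx0 i
        nlinarith
      calc (1 - Real.exp (-δ)) * m ≤ (1 - Real.exp (-δ)) * ∑ i, a i * x i := by
            have hpos : 0 ≤ 1 - Real.exp (-δ) := by
              have : Real.exp (-δ) ≤ 1 := by rw [Real.exp_le_one_iff]; linarith
              linarith
            exact mul_le_mul_of_nonneg_left hm hpos
        _ = ∑ i, (1 - Real.exp (-δ)) * (a i * x i) := by rw [Finset.mul_sum]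
        _ ≤ ∑ i, c i * x i := Finset.sum_le_sum fun i _ => h1 i
    -- Markov
    set ε : ℝ := Real.exp (-(δ * ((1 - δ) * m))) with hε
    have hgint : Integrable g P := by
      refine (integrable_const (1:ℝ)).mono'
        (Finset.measurable_prod univ fun i _ =>
          (measurable_const.sub ((hmeas i).const_mul (c i)))).aestronglyMeasurable
        (ae_of_all _ fun ω => ?_)
      have hfac : ∀ i, 0 ≤ 1 - c i * X i ω ∧ 1 - c i * X i ω ≤ 1 := fun i => by
        constructor
        · have h1 : c i * X i ω ≤ 1 := mul_le_one₀ (hc1 i) (hX0 i ω) (hX1 i ω)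
          linarith
        · nlinarith [hc0 i, hX0 i ω]
      rw [Real.norm_eq_abs, abs_of_nonneg (Finset.prod_nonneg fun i _ => (hfac i).1)]
      exact Finset.prod_le_one (fun i _ => (hfac i).1) (fun i _ => (hfac i).2)
    have hset : {ω | ∑ i, a i * X i ω ≤ (1 - δ) * m} = {ω | ε ≤ g ω} := by
      ext ω
      simp only [Set.mem_setOf_eq, hε, ← hgexp ω, Real.exp_le_exp]
      constructor
      · intro h; nlinarith
      · intro h; nlinarith
    have hMar : ε * (P {ω | ∑ i, a i * X i ω ≤ (1 - δ) * m}).toReal ≤ ∫ ω, g ω ∂P := by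
      rw [hset]
      exact mul_meas_ge_le_integral_of_nonneg
        (ae_of_all _ fun ω => by
          rw [← hgexp ω]; exact (Real.exp_pos _).le) hgint ε
    have hchain : ∫ ω, g ω ∂P ≤ Real.exp (-((1 - Real.exp (-δ)) * m)) :=
      key.trans (hD.trans (Real.exp_le_exp.mpr (by linarith)))
    have hεpos : 0 < ε := Real.exp_pos _
    have hfin : (P {ω | ∑ i, a i * X i ω ≤ (1 - δ) * m}).toReal ≤
        Real.exp (-((1 - Real.exp (-δ)) * m)) / ε := by
      rw [le_div_iff₀ hεpos]
      calc (P _).toReal * ε = ε * (P _).toReal := mul_comm _ _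
        _ ≤ ∫ ω, g ω ∂P := hMar
        _ ≤ _ := hchain
    refine hfin.trans ?_
    rw [hε, ← Real.exp_sub, Real.exp_le_exp]
    have hq := exp_neg_le_aux δ hδ0
    nlinarith [sq_nonneg δ]
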